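/- For all (small) sets L and R of surreal numbers, there exists a surreal number a with l < a for all l ∈ L and a < r for all r ∈ R if and only if l < r holds for all l ∈ L and r ∈ R. In other words, the cut (L|R) is non-empty if and only if L < R. -/

import Mathlib

universe u

namespace SetTheory

/-- Pre-games (as in Mathlib's former `SetTheory.PGame`, removed from Mathlib). -/
inductive PGame : Type (u + 1)
  | mk : ∀ α β : Type u, (α → PGame) → (β → PGame) → PGame

namespace PGame

/-- The pair `(x ≤ y, x ⧏ y)`, defined by the usual simultaneous recursion:
`x ≤ y ↔ (∀ i, xL i ⧏ y) ∧ (∀ j, x ⧏ yR j)` and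
`x ⧏ y ↔ (∃ i, x ≤ yL i) ∨ (∃ j, xR j ≤ y)`. -/
noncomputable def leLF (x : PGame.{u}) : PGame.{u} → Prop × Prop :=
  PGame.rec (motive := fun _ => PGame.{u} → Prop × Prop)
    (fun _ _ _ _ IHl IHr y =>
      PGame.rec (motive := fun _ => Prop × Prop)
        (fun yl yr yL yR JHl JHr =>
          ((∀ i, (IHl i (PGame.mk yl yr yL yR)).2) ∧ (∀ j, (JHr j).2),
            (∃ i, (JHl i).1) ∨ (∃ j, (IHr j (PGame.mk yl yr yL yR)).1)))
        y)
    x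

instance : LE PGame.{u} := ⟨fun x y => (leLF x y).1⟩

/-- As in the former Mathlib preorder on pre-games: `x < y ↔ x ≤ y ∧ ¬ y ≤ x`. -/
instance : LT PGame.{u} := ⟨fun x y => x ≤ y ∧ ¬ y ≤ x⟩

/-- Numeric pre-games, as in the former `SetTheory.PGame.Numeric`. -/
def Numeric : PGame.{u} → Prop
  | ⟨_, _, L, R⟩ => (∀ i j, L i < R j) ∧ (∀ i, Numeric (L i)) ∧ ∀ j, Numeric (R j)

end PGame

end SetTheory

/-- Surreal numbers: numeric pre-games modulo `x ≤ y ∧ y ≤ x` (as the former `Surreal`). -/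
def Surreal : Type (u + 1) :=
  Quot (fun x y : {x : SetTheory.PGame.{u} // SetTheory.PGame.Numeric x} =>
    x.1 ≤ y.1 ∧ y.1 ≤ x.1)

/-- The order of the former `Surreal`, lifted from representatives (it respects equivalence). -/
instance : LT Surreal.{u} :=
  ⟨fun a b => ∃ x y, Quot.mk _ x = a ∧ Quot.mk _ y = b ∧ x.1 < y.1⟩

namespace SetTheory
namespace PGame

def LeftMoves : PGame.{u} → Type u
  | mk l _ _ _ => l

def RightMoves : PGame.{u} → Type u
  | mk _ r _ _ => r

def moveLeft : (x : PGame.{u}) → LeftMoves x → PGame.{u}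
  | mk _ _ L _ => L

def moveRight : (x : PGame.{u}) → RightMoves x → PGame.{u}
  | mk _ _ _ R => R

def LF (x y : PGame.{u}) : Prop := (leLF x y).2

theorem pg_le_iff (x y : PGame.{u}) :
    x ≤ y ↔ (∀ i, LF (x.moveLeft i) y) ∧ ∀ j, LF x (y.moveRight j) := by
  cases x; cases y; exact Iff.rfl

theorem pg_lf_iff (x y : PGame.{u}) :
    LF x y ↔ (∃ i, x ≤ y.moveLeft i) ∨ ∃ j, x.moveRight j ≤ y := by
  cases x; cases y; exact Iff.rfl

theorem pg_lt_iff (x y : PGame.{u}) : x < y ↔ x ≤ y ∧ ¬ y ≤ x := Iff.rfl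

theorem pg_moveLeft_mk {a b : Type u} (L : a → PGame.{u}) (R : b → PGame.{u}) (i : a) :
    moveLeft (mk a b L R) i = L i := rfl

theorem pg_moveRight_mk {a b : Type u} (L : a → PGame.{u}) (R : b → PGame.{u}) (j : b) :
    moveRight (mk a b L R) j = R j := rfl

theorem pg_le_iff_not_lf_aux (x y : PGame.{u}) :
    (x ≤ y ↔ ¬ LF y x) ∧ (y ≤ x ↔ ¬ LF x y) := by
  induction x generalizing y with
  | mk xl xr xL xR IHxl IHxr =>
    induction y with
    | mk yl yr yL yR IHyl IHyr =>
      constructor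
      · rw [pg_le_iff (mk xl xr xL xR) (mk yl yr yL yR), pg_lf_iff (mk yl yr yL yR) (mk xl xr xL xR)]
        simp only [not_or, not_exists, pg_moveLeft_mk, pg_moveRight_mk]
        refine and_congr (forall_congr' fun i => ?_) (forall_congr' fun j => ?_)
        · exact ((not_congr (IHxl i _).2).trans not_not).symm
        · exact ((not_congr (IHyr j).2).trans not_not).symm
      · rw [pg_le_iff (mk yl yr yL yR) (mk xl xr xL xR), pg_lf_iff (mk xl xr xL xR) (mk yl yr yL yR)]
        simp only [not_or, not_exists, pg_moveLeft_mk, pg_moveRight_mk]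
        refine and_congr (forall_congr' fun i => ?_) (forall_congr' fun j => ?_)
        · exact ((not_congr (IHyl i).1).trans not_not).symm
        · exact ((not_congr (IHxr j _).1).trans not_not).symm

theorem pg_not_le {x y : PGame.{u}} : ¬ x ≤ y ↔ LF y x := by
  rw [(pg_le_iff_not_lf_aux x y).1, not_not]

theorem pg_le_refl (x : PGame.{u}) : x ≤ x := by
  induction x with
  | mk xl xr xL xR IHl IHr =>
    rw [pg_le_iff]
    refine ⟨fun i => ?_, fun j => ?_⟩
    · rw [pg_lf_iff]; exact Or.inl ⟨i, IHl i⟩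
    · rw [pg_lf_iff]; exact Or.inr ⟨j, IHr j⟩

theorem pg_le_trans_aux {x y z : PGame.{u}}
    (h₁ : ∀ i, y ≤ z → z ≤ x.moveLeft i → y ≤ x.moveLeft i)
    (h₂ : ∀ j, z.moveRight j ≤ x → x ≤ y → z.moveRight j ≤ y)
    (hxy : x ≤ y) (hyz : y ≤ z) : x ≤ z := by
  rw [pg_le_iff]
  refine ⟨fun i => ?_, fun j => ?_⟩
  · rw [← pg_not_le]; intro hz
    exact (pg_not_le.2 (((pg_le_iff _ _).1 hxy).1 i)) (h₁ i hyz hz)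
  · rw [← pg_not_le]; intro hz
    exact (pg_not_le.2 (((pg_le_iff _ _).1 hyz).2 j)) (h₂ j hz hxy)

theorem pg_le_trans_all (x y z : PGame.{u}) :
    (x ≤ y → y ≤ z → x ≤ z) ∧ (y ≤ z → z ≤ x → y ≤ x) ∧ (z ≤ x → x ≤ y → z ≤ y) := by
  induction x generalizing y z with
  | mk xl xr xL xR IHxl IHxr =>
    induction y generalizing z with
    | mk yl yr yL yR IHyl IHyr =>
      induction z with
      | mk zl zr zL zR IHzl IHzr =>
        exact ⟨pg_le_trans_aux (fun i => (IHxl i _ _).2.1) (fun j => (IHzr j).2.2),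
          pg_le_trans_aux (fun i => (IHyl i _).2.2) (fun j => (IHxr j _ _).1),
          pg_le_trans_aux (fun i => (IHzl i).1) (fun j => (IHyr j _).2.1)⟩

theorem pg_le_trans {x y z : PGame.{u}} (h1 : x ≤ y) (h2 : y ≤ z) : x ≤ z :=
  (pg_le_trans_all x y z).1 h1 h2

theorem pg_lt_trans {x y z : PGame.{u}} (h1 : x < y) (h2 : y < z) : x < z := by
  rw [pg_lt_iff] at h1 h2 ⊢
  exact ⟨pg_le_trans h1.1 h2.1, fun h => h1.2 (pg_le_trans h2.1 h)⟩

theorem pg_lt_of_equiv {a b x y : PGame.{u}} (h1 : x ≤ a ∧ a ≤ x) (h2 : y ≤ b ∧ b ≤ y)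
    (h : x < y) : a < b := by
  rw [pg_lt_iff] at h ⊢
  exact ⟨pg_le_trans h1.2 (pg_le_trans h.1 h2.1),
    fun hba => h.2 (pg_le_trans h2.1 (pg_le_trans hba h1.2))⟩

theorem pg_numeric_iff (x : PGame.{u}) : Numeric x ↔
    (∀ i j, x.moveLeft i < x.moveRight j) ∧ (∀ i, Numeric (x.moveLeft i)) ∧
      ∀ j, Numeric (x.moveRight j) := by
  cases x; exact Iff.rfl

theorem pg_numeric_le_aux (x : PGame.{u}) (ox : Numeric x) :
    (∀ i, x.moveLeft i ≤ x) ∧ ∀ j, x ≤ x.moveRight j := by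
  induction x with
  | mk xl xr xL xR IHl IHr =>
    rw [pg_numeric_iff] at ox
    refine ⟨fun i => ?_, fun j => ?_⟩
    · rw [pg_le_iff]
      refine ⟨fun i' => ?_, fun j => ?_⟩
      · rw [pg_lf_iff]; exact Or.inl ⟨i, (IHl i (ox.2.1 i)).1 i'⟩
      · rw [← pg_not_le]; exact ((pg_lt_iff _ _).1 (ox.1 i j)).2
    · rw [pg_le_iff]
      refine ⟨fun i => ?_, fun j' => ?_⟩
      · rw [← pg_not_le]; exact ((pg_lt_iff _ _).1 (ox.1 i j)).2
      · rw [pg_lf_iff]; exact Or.inr ⟨j, (IHr j (ox.2.2 j)).2 j'⟩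

theorem pg_moveLeft_lt (x : PGame.{u}) (ox : Numeric x) (i : LeftMoves x) : x.moveLeft i < x :=
  (pg_lt_iff _ _).2 ⟨(pg_numeric_le_aux x ox).1 i,
    pg_not_le.2 ((pg_lf_iff _ _).2 (Or.inl ⟨i, pg_le_refl _⟩))⟩

theorem pg_lt_moveRight (x : PGame.{u}) (ox : Numeric x) (j : RightMoves x) : x < x.moveRight j :=
  (pg_lt_iff _ _).2 ⟨(pg_numeric_le_aux x ox).2 j,
    pg_not_le.2 ((pg_lf_iff _ _).2 (Or.inr ⟨j, pg_le_refl _⟩))⟩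

def smk (a : {x : PGame.{u} // Numeric x}) : Surreal.{u} := Quot.mk _ a

theorem surreal_rel_of_eq {a b : {x : PGame.{u} // Numeric x}}
    (h : smk a = smk b) : a.1 ≤ b.1 ∧ b.1 ≤ a.1 := by
  have := Quot.eqvGen_exact h
  clear h
  induction this with
  | rel x y hxy => exact hxy
  | refl x => exact ⟨pg_le_refl _, pg_le_refl _⟩
  | symm x y _ ih => exact ⟨ih.2, ih.1⟩
  | trans x y z _ _ ih1 ih2 => exact ⟨pg_le_trans ih1.1 ih2.1, pg_le_trans ih2.2 ih1.2⟩

theorem surreal_lt_def (a b : Surreal.{u}) :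
    a < b ↔ ∃ x y, smk x = a ∧ smk y = b ∧ x.1 < y.1 :=
  Iff.rfl

theorem surreal_mk_lt_mk (a b : {x : PGame.{u} // Numeric x}) :
    smk a < smk b ↔ a.1 < b.1 := by
  rw [surreal_lt_def]
  constructor
  · rintro ⟨x, y, hx, hy, hxy⟩
    exact pg_lt_of_equiv (surreal_rel_of_eq hx) (surreal_rel_of_eq hy) hxy
  · intro h; exact ⟨a, b, rfl, rfl, h⟩

theorem surreal_lt_trans {a b c : Surreal.{u}} (h1 : a < b) (h2 : b < c) : a < c := by
  rw [surreal_lt_def] at h1 h2 ⊢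
  obtain ⟨x, y, rfl, rfl, hxy⟩ := h1
  obtain ⟨y', z, hy, rfl, hyz⟩ := h2
  have e := surreal_rel_of_eq hy
  exact ⟨x, z, rfl, rfl, pg_lt_trans hxy (pg_lt_of_equiv e ⟨pg_le_refl _, pg_le_refl _⟩ hyz)⟩

theorem surreal_out_eq (a : Surreal.{u}) : smk (Quot.out a) = a :=
  Quot.out_eq a

end PGame
end SetTheory

open SetTheory PGame

/-- The surreal line is a class-sized saturated linear order: for small sets `L, R` of
surreal numbers, the cut `(L|R)` is non-empty if and only if `L < R`. -/
theorem exists_mem_cut_iff (L R : Set Surreal.{u}) [Small.{u} L] [Small.{u} R] :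
    (∃ a : Surreal, (∀ l ∈ L, l < a) ∧ ∀ r ∈ R, a < r) ↔
      ∀ l ∈ L, ∀ r ∈ R, l < r := by
  constructor
  · rintro ⟨a, hL, hR⟩ l hl r hr
    exact surreal_lt_trans (hL l hl) (hR r hr)
  · intro h
    let f : Shrink.{u} L → PGame.{u} :=
      fun i => (Quot.out (((equivShrink L).symm i : L) : Surreal.{u})).1
    let g : Shrink.{u} R → PGame.{u} :=
      fun j => (Quot.out (((equivShrink R).symm j : R) : Surreal.{u})).1
    have key : ∀ a b : Surreal.{u}, a < b → (Quot.out a).1 < (Quot.out b).1 := by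
      intro a b hab
      exact (surreal_mk_lt_mk _ _).1 (by rw [surreal_out_eq, surreal_out_eq]; exact hab)
    have ox : Numeric (PGame.mk (Shrink.{u} L) (Shrink.{u} R) f g) := by
      rw [pg_numeric_iff]
      refine ⟨fun i j => ?_, fun i => ?_, fun j => ?_⟩
      · exact key _ _ (h _ ((equivShrink L).symm i).2 _ ((equivShrink R).symm j).2)
      · exact (Quot.out (((equivShrink L).symm i : L) : Surreal.{u})).2
      · exact (Quot.out (((equivShrink R).symm j : R) : Surreal.{u})).2
    refine ⟨smk ⟨PGame.mk (Shrink.{u} L) (Shrink.{u} R) f g, ox⟩, fun l hl => ?_,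
      fun r hr => ?_⟩
    · rw [← surreal_out_eq l, surreal_mk_lt_mk]
      have := pg_moveLeft_lt _ ox (equivShrink L ⟨l, hl⟩)
      have e : f (equivShrink L ⟨l, hl⟩) = (Quot.out l).1 := by
        simp only [f, Equiv.symm_apply_apply]
      rw [← e]; exact this
    · rw [← surreal_out_eq r, surreal_mk_lt_mk]
      have := pg_lt_moveRight _ ox (equivShrink R ⟨r, hr⟩)
      have e : g (equivShrink R ⟨r, hr⟩) = (Quot.out r).1 := by
        simp only [g, Equiv.symm_apply_apply]
      rw [← e]; exact this
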